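/- Let 1 < p < ∞, let v = (v_n)_{n≥0} be a positive sequence (a weight), and let r, s be nonzero real numbers. The operator B(r,s), defined by (B(r,s)x)_n = s x_{n-1} + r x_n (with x_{-1} := 0), maps l_p(v) boundedly into itself if and only if the sequence (v_{n+1}/v_n)_{n≥0} is bounded. -/
import Mathlib

open Real

/-- The generalized difference operator `B(r,s)` on sequences:
`(B(r,s)x)_n = s x_{n-1} + r x_n` with `x_{-1} := 0`. -/
def Bop (r s : ℝ) (x : ℕ → ℂ) : ℕ → ℂ
  | 0 => (r : ℂ) * x 0
  | (n + 1) => (s : ℂ) * x n + (r : ℂ) * x (n + 1)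

/-- Shift a sequence right by one, padding with `0`. -/
private def shiftSeq (f : ℕ → ℝ) : ℕ → ℝ
  | 0 => 0
  | (n + 1) => f n

private lemma two_rpow_bound (p a b : ℝ) (hp : 0 ≤ p) (ha : 0 ≤ a) (hb : 0 ≤ b) :
    (a + b) ^ p ≤ 2 ^ p * (a ^ p + b ^ p) := by
  have h1 : a + b ≤ 2 * max a b := by
    rcases le_total a b with h | h
    · rw [max_eq_right h]; linarith
    · rw [max_eq_left h]; linarith
  calc (a + b) ^ p ≤ (2 * max a b) ^ p :=
        Real.rpow_le_rpow (by positivity) h1 hp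
    _ = 2 ^ p * (max a b) ^ p := Real.mul_rpow (by norm_num) (le_max_of_le_left ha)
    _ ≤ 2 ^ p * (a ^ p + b ^ p) := by
        have hmax : (max a b) ^ p ≤ a ^ p + b ^ p := by
          rcases le_total a b with h | h
          · rw [max_eq_right h]
            nlinarith [Real.rpow_nonneg ha p]
          · rw [max_eq_left h]
            nlinarith [Real.rpow_nonneg hb p]
        have h2 : (0:ℝ) ≤ 2 ^ p := Real.rpow_nonneg (by norm_num) p
        nlinarith

/-- For `1 < p < ∞`, a weight `v` and nonzero reals `r, s`, the operator
`B(r,s)` maps `l_p(v)` boundedly into itself if and only if the sequence `(v_{n+1}/v_n)`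
is bounded. -/
theorem stmt2 (p : ℝ) (hp : 1 < p) (v : ℕ → ℝ) (hv : ∀ n, 0 < v n)
    (r s : ℝ) (hr : r ≠ 0) (hs : s ≠ 0) :
    (∃ C > 0, ∀ x : ℕ → ℂ, Summable (fun n => (‖x n‖ * v n) ^ p) →
        Summable (fun n => (‖Bop r s x n‖ * v n) ^ p) ∧
        (∑' n, (‖Bop r s x n‖ * v n) ^ p) ^ (1 / p)
          ≤ C * (∑' n, (‖x n‖ * v n) ^ p) ^ (1 / p)) ↔
      ∃ M : ℝ, ∀ n, v (n + 1) / v n ≤ M := by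
  have hp0 : (0:ℝ) < p := lt_trans one_pos hp
  constructor
  · rintro ⟨C, hC, hbd⟩
    refine ⟨C / |s|, fun n => ?_⟩
    set x : ℕ → ℂ := fun k => if k = n then 1 else 0 with hxdef
    have hx0 : ∀ k, k ≠ n → (‖x k‖ * v k) ^ p = 0 := by
      intro k hk
      simp [hxdef, hk, Real.zero_rpow hp0.ne']
    have hxsum : Summable (fun k => (‖x k‖ * v k) ^ p) := by
      apply summable_of_ne_finset_zero (s := {n})
      intro k hk
      exact hx0 k (by simpa using hk)
    obtain ⟨hB, hle⟩ := hbd x hxsum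
    have htsum : (∑' k, (‖x k‖ * v k) ^ p) = (v n) ^ p := by
      rw [tsum_eq_single n hx0]
      simp [hxdef]
    have hBn : Bop r s x (n + 1) = (s : ℂ) := by
      simp [Bop, hxdef, Nat.succ_ne_self]
    have hterm : (|s| * v (n+1)) ^ p ≤ ∑' k, (‖Bop r s x k‖ * v k) ^ p := by
      have h := Summable.le_tsum hB (n+1) (fun k _ => Real.rpow_nonneg (mul_nonneg (norm_nonneg _) (hv k).le) p)
      simpa [hBn, Complex.norm_real, Real.norm_eq_abs] using h
    have h2 : (∑' k, (‖Bop r s x k‖ * v k) ^ p) ^ (1/p) ≤ C * v n := by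
      calc (∑' k, (‖Bop r s x k‖ * v k) ^ p) ^ (1/p)
          ≤ C * (∑' k, (‖x k‖ * v k) ^ p) ^ (1/p) := hle
        _ = C * v n := by
            rw [htsum, one_div, Real.rpow_rpow_inv (hv n).le hp0.ne']
    have h3 : |s| * v (n+1) ≤ C * v n := by
      have h4 : ((|s| * v (n+1)) ^ p) ^ (1/p)
          ≤ (∑' k, (‖Bop r s x k‖ * v k) ^ p) ^ (1/p) :=
        Real.rpow_le_rpow (Real.rpow_nonneg (mul_nonneg (abs_nonneg s) (hv _).le) p)
          hterm (one_div_nonneg.mpr hp0.le)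
      rw [one_div] at h2 h4
      rw [Real.rpow_rpow_inv (mul_nonneg (abs_nonneg s) (hv _).le) hp0.ne'] at h4
      exact h4.trans h2
    rw [div_le_div_iff₀ (hv n) (abs_pos.mpr hs)]
    nlinarith
  · rintro ⟨M, hM⟩
    have hM0 : 0 < M := lt_of_lt_of_le (div_pos (hv 1) (hv 0)) (hM 0)
    have hv' : ∀ n, v (n+1) ≤ M * v n := fun n => (div_le_iff₀ (hv n)).mp (hM n)
    set A : ℝ := 2 ^ p * (|s| * M) ^ p with hA
    set B2 : ℝ := 2 ^ p * |r| ^ p with hB2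
    have hA0 : 0 ≤ A := by positivity
    have hB20 : 0 ≤ B2 := by positivity
    have hK : 0 < A + B2 := by
      have : 0 < B2 := by
        have h1 : (0:ℝ) < 2 ^ p := Real.rpow_pos_of_pos (by norm_num) p
        have h2 : (0:ℝ) < |r| ^ p := Real.rpow_pos_of_pos (abs_pos.mpr hr) p
        positivity
      linarith
    refine ⟨(A + B2) ^ (1/p), Real.rpow_pos_of_pos hK _, fun x hx => ?_⟩
    set f : ℕ → ℝ := fun n => (‖x n‖ * v n) ^ p with hf
    have hfnn : ∀ n, 0 ≤ f n := fun n => Real.rpow_nonneg (mul_nonneg (norm_nonneg _) (hv n).le) p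
    have hshift : Summable (shiftSeq f) := by
      apply (summable_nat_add_iff 1).mp
      simpa [shiftSeq] using hx
    have key : ∀ n, (‖Bop r s x n‖ * v n) ^ p ≤ A * shiftSeq f n + B2 * f n := by
      intro n
      match n with
      | 0 =>
          have h1 : ‖Bop r s x 0‖ = |r| * ‖x 0‖ := by
            simp [Bop, Complex.norm_real, Real.norm_eq_abs]
          rw [h1, mul_assoc,
            Real.mul_rpow (abs_nonneg r) (mul_nonneg (norm_nonneg _) (hv 0).le)]
          have h2 : (1:ℝ) ≤ 2 ^ p := Real.one_le_rpow (by norm_num) hp0.le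
          have h3 : (0:ℝ) ≤ (‖x 0‖ * v 0) ^ p :=
            Real.rpow_nonneg (mul_nonneg (norm_nonneg _) (hv 0).le) p
          have h4 : (0:ℝ) ≤ |r| ^ p := Real.rpow_nonneg (abs_nonneg r) p
          show |r| ^ p * (‖x 0‖ * v 0) ^ p
            ≤ A * shiftSeq f 0 + 2 ^ p * |r| ^ p * ((‖x 0‖ * v 0) ^ p)
          simp only [shiftSeq, mul_zero, zero_add]
          nlinarith [mul_nonneg (sub_nonneg.mpr h2) (mul_nonneg h4 h3)]
      | (k+1) =>
          have hnorm : ‖Bop r s x (k+1)‖ ≤ |s| * ‖x k‖ + |r| * ‖x (k+1)‖ := by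
            calc ‖Bop r s x (k+1)‖ ≤ ‖(s:ℂ) * x k‖ + ‖(r:ℂ) * x (k+1)‖ :=
                  norm_add_le _ _
              _ = |s| * ‖x k‖ + |r| * ‖x (k+1)‖ := by
                  simp [Complex.norm_real, Real.norm_eq_abs]
          have step1 : ‖Bop r s x (k+1)‖ * v (k+1)
              ≤ |s| * M * (‖x k‖ * v k) + |r| * (‖x (k+1)‖ * v (k+1)) := by
            have h5 : |s| * ‖x k‖ * v (k+1) ≤ |s| * ‖x k‖ * (M * v k) := by
              have := hv' k
              have h6 : 0 ≤ |s| * ‖x k‖ := by positivity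
              nlinarith
            have h7 := hv k
            have h8 : 0 ≤ ‖Bop r s x (k+1)‖ := norm_nonneg _
            nlinarith [mul_le_mul_of_nonneg_right hnorm (hv (k+1)).le]
          calc (‖Bop r s x (k+1)‖ * v (k+1)) ^ p
              ≤ (|s| * M * (‖x k‖ * v k) + |r| * (‖x (k+1)‖ * v (k+1))) ^ p :=
                Real.rpow_le_rpow (mul_nonneg (norm_nonneg _) (hv _).le) step1 hp0.le
            _ ≤ 2 ^ p * ((|s| * M * (‖x k‖ * v k)) ^ p
                  + (|r| * (‖x (k+1)‖ * v (k+1))) ^ p) :=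
                two_rpow_bound p _ _ hp0.le
                  (mul_nonneg (mul_nonneg (abs_nonneg s) hM0.le)
                    (mul_nonneg (norm_nonneg _) (hv k).le))
                  (mul_nonneg (abs_nonneg r) (mul_nonneg (norm_nonneg _) (hv (k+1)).le))
            _ = A * shiftSeq f (k+1) + B2 * f (k+1) := by
                rw [Real.mul_rpow (mul_nonneg (abs_nonneg s) hM0.le)
                    (mul_nonneg (norm_nonneg _) (hv k).le),
                  Real.mul_rpow (abs_nonneg r)
                    (mul_nonneg (norm_nonneg _) (hv (k+1)).le)]
                simp only [shiftSeq, hA, hB2, hf]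
                ring
    have hgsum : Summable (fun n => A * shiftSeq f n + B2 * f n) :=
      (hshift.mul_left A).add (hx.mul_left B2)
    have hBsum : Summable (fun n => (‖Bop r s x n‖ * v n) ^ p) :=
      Summable.of_nonneg_of_le (fun n => Real.rpow_nonneg (mul_nonneg (norm_nonneg _) (hv n).le) p) key hgsum
    refine ⟨hBsum, ?_⟩
    have htshift : ∑' n, shiftSeq f n = ∑' n, f n := by
      rw [Summable.tsum_eq_zero_add hshift]
      simp [shiftSeq]
    have hsum_le : ∑' n, (‖Bop r s x n‖ * v n) ^ p ≤ (A + B2) * ∑' n, f n := by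
      calc ∑' n, (‖Bop r s x n‖ * v n) ^ p
          ≤ ∑' n, (A * shiftSeq f n + B2 * f n) := Summable.tsum_le_tsum key hBsum hgsum
        _ = A * (∑' n, shiftSeq f n) + B2 * ∑' n, f n := by
            rw [Summable.tsum_add (hshift.mul_left A) (hx.mul_left B2),
              tsum_mul_left, tsum_mul_left]
        _ = (A + B2) * ∑' n, f n := by rw [htshift]; ring
    calc (∑' n, (‖Bop r s x n‖ * v n) ^ p) ^ (1/p)
        ≤ ((A + B2) * ∑' n, f n) ^ (1/p) :=
          Real.rpow_le_rpow
            (tsum_nonneg fun n => Real.rpow_nonneg (mul_nonneg (norm_nonneg _) (hv n).le) p)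
            hsum_le (one_div_nonneg.mpr hp0.le)
      _ = (A + B2) ^ (1/p) * (∑' n, f n) ^ (1/p) :=
          Real.mul_rpow hK.le (tsum_nonneg hfnn)
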